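/- For M, N, K positive integers, the number of strictly increasing integer sequences I₁ < I₂ < ⋯ < I_M satisfying, for every r = 1,…,M, the inequalities r(r−1)K/2 ≤ I₁+⋯+I_r and I_{M−r+1}+⋯+I_M ≤ rMK − r(r+1)K/2 + rN − 1, equals (N/(KM+N))·C(KM+N, M). -/

import Mathlib

namespace CRBS

/-- Bilateral partial sum: `Wf f m = f 1 + ... + f m` for `m ≥ 0`,
and `-(f (m+1) + ... + f 0)` for `m < 0`. -/
noncomputable def Wf (f : ℤ → ℤ) (m : ℤ) : ℤ :=
  (∑ j ∈ Finset.Ioc 0 m, f j) - (∑ j ∈ Finset.Ioc m 0, f j)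

lemma Wf_zero (f : ℤ → ℤ) : Wf f 0 = 0 := by simp [Wf]

lemma Wf_of_nonneg (f : ℤ → ℤ) {m : ℤ} (h : 0 ≤ m) :
    Wf f m = ∑ j ∈ Finset.Ioc 0 m, f j := by
  unfold Wf
  rw [Finset.Ioc_eq_empty (a := m) (b := (0:ℤ)) (by omega)]
  simp

lemma Wf_of_nonpos (f : ℤ → ℤ) {m : ℤ} (h : m ≤ 0) :
    Wf f m = -∑ j ∈ Finset.Ioc m 0, f j := by
  unfold Wf
  rw [Finset.Ioc_eq_empty (a := (0:ℤ)) (b := m) (by omega)]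
  simp

lemma Wf_succ (f : ℤ → ℤ) (m : ℤ) : Wf f (m + 1) = Wf f m + f (m + 1) := by
  rcases le_or_gt 0 m with h | h
  · rw [Wf_of_nonneg f h, Wf_of_nonneg f (by omega : (0:ℤ) ≤ m + 1)]
    have e : Finset.Ioc (0:ℤ) (m+1) = insert (m+1) (Finset.Ioc 0 m) := by
      ext x; simp only [Finset.mem_Ioc, Finset.mem_insert]; omega
    rw [e, Finset.sum_insert (by simp [Finset.mem_Ioc])]
    ring
  · rw [Wf_of_nonpos f (by omega : m ≤ 0), Wf_of_nonpos f (by omega : m + 1 ≤ 0)]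
    have e : Finset.Ioc m (0:ℤ) = insert (m+1) (Finset.Ioc (m+1) 0) := by
      ext x; simp only [Finset.mem_Ioc, Finset.mem_insert]; omega
    rw [e, Finset.sum_insert (by simp [Finset.mem_Ioc])]
    ring

lemma Wf_pred (f : ℤ → ℤ) (m : ℤ) : Wf f (m - 1) = Wf f m - f m := by
  have h := Wf_succ f (m - 1)
  have e : m - 1 + 1 = m := by ring
  rw [e] at h
  omega

lemma Wf_comp_add (f : ℤ → ℤ) (c : ℤ) : ∀ m : ℤ,
    Wf (fun j => f (j + c)) m = Wf f (m + c) - Wf f c := by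
  intro m
  induction m using Int.induction_on with
  | zero => simp [Wf_zero]
  | succ k ih =>
      rw [Wf_succ, ih]
      rw [show ((k:ℤ) + 1 + c) = (k + c) + 1 from by ring, Wf_succ]
      ring
  | pred k ih =>
      have h1 : Wf (fun j => f (j + c)) (-(k:ℤ) - 1) =
          Wf (fun j => f (j + c)) (-(k:ℤ)) - f (-(k:ℤ) + c) := by
        have := Wf_pred (fun j => f (j + c)) (-(k:ℤ))
        exact this
      have h2 : Wf f (-(k:ℤ) - 1 + c) = Wf f (-(k:ℤ) + c) - f (-(k:ℤ) + c) := by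
        have := Wf_pred f (-(k:ℤ) + c)
        rw [show (-(k:ℤ) + c - 1) = (-(k:ℤ) - 1 + c) from by ring] at this
        exact this
      omega


/-- `i` is the (unique) leftmost global minimizer of `Wf f`. -/
def Good (f : ℤ → ℤ) (i : ℤ) : Prop :=
  (∀ m, m < i → Wf f i < Wf f m) ∧ (∀ m, i < m → Wf f i ≤ Wf f m)

lemma good_unique {f : ℤ → ℤ} {i i' : ℤ} (h : Good f i) (h' : Good f i') : i = i' := by
  by_contra hne
  rcases lt_or_gt_of_ne hne with hlt | hlt
  · exact absurd (h.2 i' hlt) (not_le.2 (h'.1 i hlt))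
  · exact absurd (h'.2 i hlt) (not_le.2 (h.1 i' hlt))

section QP

variable {f : ℤ → ℤ} {Mz Nz : ℤ}

lemma hdiff (hf : ∀ j, f (j + Mz) = f j + Nz) :
    ∀ m : ℤ, Wf f (m + Mz) - Wf f m = Wf f Mz + Nz * m := by
  intro m
  induction m using Int.induction_on with
  | zero => rw [zero_add, Wf_zero, mul_zero]; ring
  | succ k ih =>
      have e1 : ((k:ℤ) + 1 + Mz) = (k + Mz) + 1 := by ring
      rw [e1]
      have hA := Wf_succ f ((k:ℤ) + Mz)
      have hB : f ((k:ℤ) + Mz + 1) = f ((k:ℤ) + 1) + Nz := by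
        rw [show ((k:ℤ) + Mz + 1) = ((k:ℤ) + 1) + Mz from by ring]; exact hf _
      have hC := Wf_succ f (k:ℤ)
      linarith [ih]
  | pred k ih =>
      have e1 : (-(k:ℤ) - 1 + Mz) = (-(k:ℤ) + Mz) - 1 := by ring
      rw [e1]
      have hA := Wf_pred f (-(k:ℤ) + Mz)
      have hB : f (-(k:ℤ) + Mz) = f (-(k:ℤ)) + Nz := by
        rw [show (-(k:ℤ) + Mz) = (-(k:ℤ)) + Mz from rfl]; exact hf _
      have hC := Wf_pred f (-(k:ℤ))
      have e2 : (-(k:ℤ)) - 1 = -(k:ℤ) - 1 := rfl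
      rw [e2] at hC
      linarith [ih]

variable (hM : 0 < Mz) (hN : 0 < Nz) (hf : ∀ j, f (j + Mz) = f j + Nz)
include hM

/-- going right in steps of `Mz`, gaining at least `d` each time -/
lemma chainU (d a : ℤ) (hstep : ∀ x, a ≤ x → Wf f x + d ≤ Wf f (x + Mz)) :
    ∀ (k : ℕ) (m : ℤ), a ≤ m → Wf f m + d * k ≤ Wf f (m + k * Mz) := by
  intro k
  induction k with
  | zero => intro m _; simp
  | succ k ih =>
      intro m hm
      have h1 := ih m hm
      have hk0 : (0:ℤ) ≤ (k:ℤ) * Mz := mul_nonneg (Int.natCast_nonneg k) (le_of_lt hM)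
      have h2 := hstep (m + k * Mz) (by linarith)
      have e : m + (k+1 : ℕ) * Mz = (m + k * Mz) + Mz := by push_cast; ring
      rw [e]
      push_cast
      linarith

lemma chainD (d a : ℤ) (hstep : ∀ x, x + Mz ≤ a → Wf f (x + Mz) + d ≤ Wf f x) :
    ∀ (k : ℕ) (m : ℤ), m ≤ a → Wf f m + d * k ≤ Wf f (m - k * Mz) := by
  intro k
  induction k with
  | zero => intro m _; simp
  | succ k ih =>
      intro m hm
      have h1 := ih m hm
      have hk0 : (0:ℤ) ≤ (k:ℤ) * Mz := mul_nonneg (Int.natCast_nonneg k) (le_of_lt hM)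
      have h2 := hstep (m - (k+1:ℕ) * Mz) (by push_cast; linarith)
      have e : m - (k+1:ℕ) * Mz + Mz = m - k * Mz := by push_cast; ring
      rw [e] at h2
      push_cast at h2 ⊢
      linarith

lemma decomposeU : ∀ i m : ℤ, i < m →
    ∃ (k : ℕ) (m₀ : ℤ), i < m₀ ∧ m₀ ≤ i + Mz ∧ m = m₀ + k * Mz := by
  intro i m him
  have hdvd := Int.mul_ediv_add_emod (m - i - 1) Mz
  have hr0 : 0 ≤ (m - i - 1) % Mz := Int.emod_nonneg _ (by omega)
  have hr1 : (m - i - 1) % Mz < Mz := Int.emod_lt_of_pos _ hM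
  have hq0 : 0 ≤ (m - i - 1) / Mz := Int.ediv_nonneg (by omega) (by omega)
  refine ⟨((m - i - 1) / Mz).toNat, i + 1 + (m - i - 1) % Mz, by omega, by omega, ?_⟩
  have h1 : (((m - i - 1) / Mz).toNat : ℤ) = (m - i - 1) / Mz := Int.toNat_of_nonneg hq0
  rw [h1]
  have h2 : (m - i - 1) / Mz * Mz = Mz * ((m - i - 1) / Mz) := mul_comm _ _
  omega

lemma decomposeD : ∀ i m : ℤ, m < i →
    ∃ (k : ℕ) (m₀ : ℤ), i - Mz ≤ m₀ ∧ m₀ < i ∧ m = m₀ - k * Mz := by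
  intro i m him
  have hdvd := Int.mul_ediv_add_emod (i - 1 - m) Mz
  have hr0 : 0 ≤ (i - 1 - m) % Mz := Int.emod_nonneg _ (by omega)
  have hr1 : (i - 1 - m) % Mz < Mz := Int.emod_lt_of_pos _ hM
  have hq0 : 0 ≤ (i - 1 - m) / Mz := Int.ediv_nonneg (by omega) (by omega)
  refine ⟨((i - 1 - m) / Mz).toNat, i - 1 - (i - 1 - m) % Mz, by omega, by omega, ?_⟩
  have h1 : (((i - 1 - m) / Mz).toNat : ℤ) = (i - 1 - m) / Mz := Int.toNat_of_nonneg hq0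
  rw [h1]
  have h2 : (i - 1 - m) / Mz * Mz = Mz * ((i - 1 - m) / Mz) := mul_comm _ _
  omega

include hN hf

lemma good_of_window (i : ℤ)
    (hr : ∀ r : ℤ, 1 ≤ r → r ≤ Mz →
      Wf f i ≤ Wf f (i + r) ∧ Wf f i + 1 ≤ Wf f (i - r)) : Good f i := by
  have hd := hdiff hf
  have h0i : 0 ≤ Wf f Mz + Nz * i := by
    have h1 := (hr Mz (by omega) le_rfl).1
    have h2 := hd i
    omega
  have hstepU : ∀ x, i ≤ x → Wf f x + 0 ≤ Wf f (x + Mz) := by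
    intro x hx
    have h1 := hd x
    have h3 : Nz * i ≤ Nz * x := mul_le_mul_of_nonneg_left hx (by omega)
    omega
  have h2i : Wf f Mz + Nz * (i - Mz) ≤ -1 := by
    have h1 := (hr Mz (by omega) le_rfl).2
    have h2 := hd (i - Mz)
    rw [show (i - Mz + Mz) = i from by ring] at h2
    omega
  have hstepD : ∀ x, x + Mz ≤ i → Wf f (x + Mz) + 1 ≤ Wf f x := by
    intro x hx
    have h1 := hd x
    have h3 : Nz * x ≤ Nz * (i - Mz) := mul_le_mul_of_nonneg_left (by omega) (by omega)
    omega
  constructor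
  · intro m hm
    obtain ⟨k, m₀, h1, h2, h3⟩ := decomposeD hM i m hm
    have hw := (hr (i - m₀) (by omega) (by omega)).2
    rw [show (i - (i - m₀)) = m₀ from by ring] at hw
    have hc := chainD hM 1 i hstepD k m₀ (by omega)
    rw [← h3] at hc
    omega
  · intro m hm
    obtain ⟨k, m₀, h1, h2, h3⟩ := decomposeU hM i m hm
    have hw := (hr (m₀ - i) (by omega) (by omega)).1
    rw [show (i + (m₀ - i)) = m₀ from by ring] at hw
    have hc := chainU hM 0 i hstepU k m₀ (by omega)
    rw [← h3] at hc
    omega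

lemma good_exists : ∃ i, Good f i := by
  classical
  have hd := hdiff hf
  set B : ℤ := |Wf f Mz| + 1 with hB
  have hBpos : 0 < B := by positivity
  have hUp : ∀ x, B ≤ x → Wf f x + 1 ≤ Wf f (x + Mz) := by
    intro x hx
    have h1 := hd x
    have habs : -|Wf f Mz| ≤ Wf f Mz := neg_abs_le _
    have hx0 : 0 ≤ x := by omega
    have h3 : 0 ≤ (Nz - 1) * x := mul_nonneg (by omega) hx0
    have h4 : Nz * x = x + (Nz - 1) * x := by ring
    omega
  have hDn : ∀ x, x + Mz ≤ -B → Wf f (x + Mz) + 1 ≤ Wf f x := by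
    intro x hx
    have h1 := hd x
    have habs : Wf f Mz ≤ |Wf f Mz| := le_abs_self _
    have hx0 : x ≤ -B := by omega
    have h3 : 0 ≤ (Nz - 1) * (-x) := mul_nonneg (by omega) (by omega)
    have h4 : Nz * x = x - (Nz - 1) * (-x) := by ring
    omega
  set F : Finset ℤ := Finset.Icc (-B - Mz) (B + Mz) with hF
  have hFne : F.Nonempty := ⟨0, by simp only [hF, Finset.mem_Icc]; omega⟩
  set μ : ℤ := F.inf' hFne (Wf f) with hμdef
  have hμ : ∀ m ∈ F, μ ≤ Wf f m := fun m hm => Finset.inf'_le _ hm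
  set T : Finset ℤ := F.filter (fun m => Wf f m = μ) with hT
  have hTne : T.Nonempty := by
    obtain ⟨m, hm, hmeq⟩ := Finset.exists_mem_eq_inf' hFne (Wf f)
    exact ⟨m, Finset.mem_filter.2 ⟨hm, hmeq.symm⟩⟩
  set i : ℤ := T.min' hTne with hi
  have hiT : i ∈ T := Finset.min'_mem _ _
  have hiF : i ∈ F := (Finset.mem_filter.1 hiT).1
  have hiμ : Wf f i = μ := (Finset.mem_filter.1 hiT).2
  have hiFb : -B - Mz ≤ i ∧ i ≤ B + Mz := Finset.mem_Icc.1 hiF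
  have claim1 : ∀ m, -B - Mz ≤ m → μ ≤ Wf f m := by
    intro m hm
    rcases le_or_gt m (B + Mz) with h | h
    · exact hμ m (Finset.mem_Icc.2 ⟨hm, h⟩)
    · obtain ⟨k, m₀, h1, h2, h3⟩ := decomposeU hM B m (by omega)
      have hc := chainU hM 1 B hUp k m₀ (by omega)
      rw [← h3] at hc
      have hμ0 : μ ≤ Wf f m₀ := hμ m₀ (Finset.mem_Icc.2 ⟨by omega, by omega⟩)
      have hk : (0:ℤ) ≤ (k:ℤ) := Int.natCast_nonneg k
      omega
  have claim2 : ∀ m, m < -B - Mz → μ + 1 ≤ Wf f m := by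
    intro m hm
    obtain ⟨k, m₀, h1, h2, h3⟩ := decomposeD hM (-B) m (by omega)
    have hc := chainD hM 1 (-B) hDn k m₀ (by omega)
    rw [← h3] at hc
    have hmem : μ ≤ Wf f m₀ := hμ m₀ (Finset.mem_Icc.2 ⟨by omega, by omega⟩)
    have hk1 : 1 ≤ (k:ℤ) := by
      rcases Nat.eq_zero_or_pos k with hk | hk
      · subst hk; simp at h3; omega
      · exact_mod_cast hk
    omega
  refine ⟨i, ?_, ?_⟩
  · intro m hm
    rcases le_or_gt (-B - Mz) m with h | h
    · have h1 := claim1 m h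
      rcases eq_or_lt_of_le h1 with heq | hlt
      · exfalso
        have hmT : m ∈ T := Finset.mem_filter.2 ⟨Finset.mem_Icc.2 ⟨h, by omega⟩, heq.symm⟩
        have := Finset.min'_le _ _ hmT
        omega
      · omega
    · have := claim2 m h
      omega
  · intro m hm
    have := claim1 m (by omega)
    omega

end QP

lemma good_comp_add {f : ℤ → ℤ} {c i : ℤ} (h : Good f (i + c)) :
    Good (fun j => f (j + c)) i := by
  constructor
  · intro m hm
    have h1 := Wf_comp_add f c m
    have h2 := Wf_comp_add f c i
    have h3 := h.1 (m + c) (by omega)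
    omega
  · intro m hm
    have h1 := Wf_comp_add f c m
    have h2 := Wf_comp_add f c i
    have h3 := h.2 (m + c) (by omega)
    omega

lemma good_comp_add' {f : ℤ → ℤ} {c i : ℤ} (h : Good (fun j => f (j + c)) i) :
    Good f (i + c) := by
  constructor
  · intro m hm
    have h1 := Wf_comp_add f c (m - c)
    have h2 := Wf_comp_add f c i
    have h3 := h.1 (m - c) (by omega)
    rw [show (m - c + c) = m from by ring] at h1
    omega
  · intro m hm
    have h1 := Wf_comp_add f c (m - c)
    have h2 := Wf_comp_add f c i
    have h3 := h.2 (m - c) (by omega)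
    rw [show (m - c + c) = m from by ring] at h1
    omega

lemma qp_mul {g : ℤ → ℤ} {Mz nz : ℤ} (hg : ∀ j, g (j + Mz) = g j + nz) :
    ∀ (j k : ℤ), g (j + k * Mz) = g j + k * nz := by
  intro j k
  induction k using Int.induction_on with
  | zero => simp
  | succ k ih =>
      have e : j + ((k:ℤ)+1) * Mz = (j + k * Mz) + Mz := by ring
      rw [e, hg, ih]; ring
  | pred k ih =>
      have e : j + (-(k:ℤ)) * Mz = (j + (-(k:ℤ)-1) * Mz) + Mz := by ring
      rw [e, hg] at ih
      linarith

section PL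

variable {M : ℕ} {n : ℤ}

/-- Periodic lift of a tuple `I : Fin M → ℤ`:  `PL n I j = I (j-1 mod M) + n * ((j-1) div M)`,
so that `PL n I (a+1) = I a` for `a = 0,...,M-1` and `PL n I (j+M) = PL n I j + n`. -/
def PL (n : ℤ) (I : Fin M → ℤ) (j : ℤ) : ℤ :=
  if h : 0 < M then
    I ⟨((j-1) % (M:ℤ)).toNat, by
      have h1 : 0 ≤ (j-1) % (M:ℤ) := Int.emod_nonneg _ (by positivity)
      have h2 : (j-1) % (M:ℤ) < M := Int.emod_lt_of_pos _ (by exact_mod_cast h)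
      omega⟩ + n * ((j-1) / (M:ℤ))
  else 0

variable (hM : 0 < M)
include hM

lemma PL_eval_gen (I : Fin M → ℤ) (a : Fin M) (q : ℤ) :
    PL n I ((a:ℤ) + 1 + q * (M:ℤ)) = I a + n * q := by
  unfold PL
  rw [dif_pos hM]
  have e1 : ((a:ℤ) + 1 + q * (M:ℤ) - 1) = (a:ℤ) + q * (M:ℤ) := by ring
  have h2 : ((a:ℤ) + 1 + q * (M:ℤ) - 1) % (M:ℤ) = (a:ℤ) := by
    rw [e1, Int.add_mul_emod_self_right]
    exact Int.emod_eq_of_lt (by positivity) (by exact_mod_cast a.isLt)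
  have h3 : ((a:ℤ) + 1 + q * (M:ℤ) - 1) / (M:ℤ) = q := by
    rw [e1, Int.add_mul_ediv_right _ _ (by positivity : (0:ℤ) < (M:ℤ)).ne']
    rw [Int.ediv_eq_zero_of_lt (by positivity) (by exact_mod_cast a.isLt)]
    ring
  have h4 : (⟨(((a:ℤ) + 1 + q * (M:ℤ) - 1) % (M:ℤ)).toNat, by
      have h1 : 0 ≤ ((a:ℤ) + 1 + q * (M:ℤ) - 1) % (M:ℤ) := Int.emod_nonneg _ (by positivity)
      have h2 : ((a:ℤ) + 1 + q * (M:ℤ) - 1) % (M:ℤ) < M := Int.emod_lt_of_pos _ (by exact_mod_cast hM)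
      omega⟩ : Fin M) = a := by
    apply Fin.ext
    simp only [h2]
    simp
  rw [h4, h3]

lemma PL_decomp (j : ℤ) : ∃ (a : Fin M) (q : ℤ), j = (a:ℤ) + 1 + q * (M:ℤ) := by
  have hdvd := Int.mul_ediv_add_emod (j-1) (M:ℤ)
  have h1 : 0 ≤ (j-1) % (M:ℤ) := Int.emod_nonneg _ (by positivity)
  have h2 : (j-1) % (M:ℤ) < M := Int.emod_lt_of_pos _ (by exact_mod_cast hM)
  refine ⟨⟨((j-1) % (M:ℤ)).toNat, by omega⟩, (j-1) / (M:ℤ), ?_⟩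
  have h3 : ((((j-1) % (M:ℤ)).toNat : ℤ)) = (j-1) % (M:ℤ) := Int.toNat_of_nonneg h1
  have h4 : (j-1) / (M:ℤ) * (M:ℤ) = (M:ℤ) * ((j-1) / (M:ℤ)) := mul_comm _ _
  simp only [h3]
  omega

lemma PL_eval (I : Fin M → ℤ) (a : Fin M) : PL n I ((a:ℤ) + 1) = I a := by
  have := PL_eval_gen (n := n) hM I a 0
  simpa using this

lemma PL_qp (I : Fin M → ℤ) : ∀ j, PL n I (j + (M:ℤ)) = PL n I j + n := by
  intro j
  obtain ⟨a, q, rfl⟩ := PL_decomp hM j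
  have e : (a:ℤ) + 1 + q * (M:ℤ) + (M:ℤ) = (a:ℤ) + 1 + (q+1) * (M:ℤ) := by ring
  rw [e, PL_eval_gen hM, PL_eval_gen hM]
  ring

lemma PL_lift_unique {g : ℤ → ℤ} {I : Fin M → ℤ}
    (hg : ∀ j, g (j + (M:ℤ)) = g j + n)
    (hw : ∀ a : Fin M, g ((a:ℤ) + 1) = I a) : ∀ j, g j = PL n I j := by
  intro j
  obtain ⟨a, q, rfl⟩ := PL_decomp hM j
  rw [qp_mul hg ((a:ℤ)+1) q, hw, PL_eval_gen hM]
  ring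

lemma PL_strictMono {I : Fin M → ℤ} (hSM : StrictMono I)
    (hlt : I ⟨M-1, by omega⟩ < I ⟨0, hM⟩ + n) : StrictMono (PL n I) := by
  apply strictMono_int_of_lt_succ
  intro j
  obtain ⟨a, q, rfl⟩ := PL_decomp hM j
  rcases lt_or_ge ((a:ℕ) + 1) M with h | h
  · have e : (a:ℤ) + 1 + q * (M:ℤ) + 1 = ((⟨(a:ℕ)+1, h⟩ : Fin M):ℤ) + 1 + q * (M:ℤ) := by
      push_cast; ring
    rw [e, PL_eval_gen hM, PL_eval_gen hM]
    have : I a < I ⟨(a:ℕ)+1, h⟩ := hSM (by simp [Fin.lt_def])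
    omega
  · have ha : (a:ℕ) = M - 1 := by have := a.isLt; omega
    have hM1 : ((a:ℕ):ℤ) = (M:ℤ) - 1 := by omega
    have hz : ((⟨0, hM⟩ : Fin M):ℤ) = 0 := by simp
    have e : (a:ℤ) + 1 + q * (M:ℤ) + 1 = ((⟨0, hM⟩ : Fin M):ℤ) + 1 + (q+1) * (M:ℤ) := by
      rw [hM1, hz]; ring
    rw [e, PL_eval_gen hM, PL_eval_gen hM]
    have ha' : a = ⟨M-1, by omega⟩ := by
      apply Fin.ext; simp only [Fin.val_mk]; omega
    rw [ha']
    linarith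

end PL

lemma exists_threshold {g : ℤ → ℤ} {Mz nz : ℤ} (hmono : StrictMono g)
    (hqp : ∀ j, g (j + Mz) = g j + nz) (hn : 0 < nz) :
    ∃! d : ℤ, g d < 0 ∧ 0 ≤ g (d + 1) := by
  have hmul := qp_mul hqp
  have hinh : ∃ z : ℤ, g z < 0 := by
    refine ⟨1 + (-(|g 1| + 1)) * Mz, ?_⟩
    rw [hmul 1 _]
    have h1 : (|g 1| + 1) * 1 ≤ (|g 1| + 1) * nz :=
      mul_le_mul_of_nonneg_left (by omega) (by positivity)
    have h2 : g 1 ≤ |g 1| := le_abs_self _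
    nlinarith
  have hbdd : ∃ b : ℤ, ∀ z : ℤ, g z < 0 → z ≤ b := by
    refine ⟨1 + (|g 1| + 1) * Mz, ?_⟩
    intro z hz
    by_contra hc
    push_neg at hc
    have h0 : g (1 + (|g 1| + 1) * Mz) ≤ g z := hmono.monotone (by omega)
    rw [hmul 1 _] at h0
    have h1 : (|g 1| + 1) * 1 ≤ (|g 1| + 1) * nz :=
      mul_le_mul_of_nonneg_left (by omega) (by positivity)
    have h2 : -(|g 1|) ≤ g 1 := neg_abs_le _
    nlinarith
  obtain ⟨d, hd, hmax⟩ := Int.exists_greatest_of_bdd hbdd hinh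
  refine ⟨d, ⟨hd, ?_⟩, ?_⟩
  · by_contra hc
    push_neg at hc
    have := hmax (d+1) hc
    omega
  · rintro d' ⟨hd1', hd2'⟩
    have h1 := hmax d' hd1'
    rcases eq_or_lt_of_le h1 with h | h
    · omega
    · exfalso
      have : g (d' + 1) ≤ g d := hmono.monotone (by omega)
      omega

open Classical in
noncomputable def gidx (f : ℤ → ℤ) : ℤ :=
  if h : ∃ i, Good f i then h.choose else 0

lemma gidx_good {f : ℤ → ℤ} (h : ∃ i, Good f i) : Good f (gidx f) := by
  rw [gidx, dif_pos h]; exact h.choose_spec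

lemma gidx_eq {f : ℤ → ℤ} {i : ℤ} (hi : Good f i) : gidx f = i :=
  good_unique (gidx_good ⟨i, hi⟩) hi

open Classical in
noncomputable def thr (g : ℤ → ℤ) : ℤ :=
  if h : ∃ d, g d < 0 ∧ 0 ≤ g (d + 1) then h.choose else 0

lemma thr_spec {g : ℤ → ℤ} (h : ∃ d, g d < 0 ∧ 0 ≤ g (d + 1)) :
    g (thr g) < 0 ∧ 0 ≤ g (thr g + 1) := by
  rw [thr, dif_pos h]; exact h.choose_spec

lemma thr_eq {g : ℤ → ℤ} {Mz nzq d : ℤ} (hmono : StrictMono g)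
    (hqp : ∀ j, g (j + Mz) = g j + nzq) (hn : 0 < nzq)
    (hd : g d < 0 ∧ 0 ≤ g (d + 1)) : thr g = d :=
  (exists_threshold hmono hqp hn).unique (thr_spec ⟨d, hd⟩) hd

/-- Step function of the walk attached to `q` with slope-shift `θ`. -/
def SF (Kz θ : ℤ) (q : ℤ → ℤ) : ℤ → ℤ := fun j => q j - Kz * j - θ

variable {M N K : ℕ}

def nzv (M N K : ℕ) : ℤ := (K:ℤ) * M + N

def CondC (M N K : ℕ) (I : Fin M → ℤ) : Prop :=
  StrictMono I ∧ ∀ a, 0 ≤ I a ∧ I a < nzv M N K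

def CondS (M N K : ℕ) (I : Fin M → ℤ) : Prop :=
  StrictMono I ∧ Good (SF (K:ℤ) (-(K:ℤ)) (PL (nzv M N K) I)) 0

lemma nzv_pos (hN : 0 < N) : 0 < nzv M N K := by
  have h : ((K*M+N : ℕ):ℤ) = nzv M N K := by unfold nzv; push_cast; ring
  rw [← h]
  exact_mod_cast Nat.lt_of_lt_of_le hN (Nat.le_add_left _ _)

lemma PL_one (hM : 0 < M) (I : Fin M → ℤ) : PL (nzv M N K) I 1 = I ⟨0, hM⟩ := by
  have := PL_eval (n := nzv M N K) hM I ⟨0, hM⟩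
  simpa using this

lemma PL_zero (hM : 0 < M) (I : Fin M → ℤ) :
    PL (nzv M N K) I 0 = I ⟨M-1, by omega⟩ - nzv M N K := by
  have h := PL_eval_gen (n := nzv M N K) hM I ⟨M-1, by omega⟩ (-1)
  have e : ((⟨M-1, by omega⟩ : Fin M):ℤ) + 1 + (-1) * (M:ℤ) = 0 := by
    simp only [Fin.val_mk]
    omega
  rw [e] at h
  rw [h]
  ring

lemma SF_qp {q : ℤ → ℤ} (hq : ∀ j, q (j + (M:ℤ)) = q j + nzv M N K) (θ : ℤ) :
    ∀ j, SF (K:ℤ) θ q (j + (M:ℤ)) = SF (K:ℤ) θ q j + (N:ℤ) := by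
  intro j
  unfold SF
  rw [hq j]
  unfold nzv
  ring

lemma condS_bounds {I : Fin M → ℤ} (hM : 0 < M) (h : CondS M N K I) :
    0 ≤ I ⟨0, hM⟩ ∧ I ⟨M-1, by omega⟩ ≤ nzv M N K - (K:ℤ) - 1 := by
  obtain ⟨-, hg⟩ := h
  set f := SF (K:ℤ) (-(K:ℤ)) (PL (nzv M N K) I) with hf
  have h1 : Wf f 0 ≤ Wf f 1 := hg.2 1 (by omega)
  have h2 : Wf f 0 < Wf f (-1) := hg.1 (-1) (by omega)
  have e1 : Wf f 1 = f 1 := by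
    have := Wf_succ f 0; simpa [Wf_zero] using this
  have e2 : Wf f (-1) = -f 0 := by
    have := Wf_pred f 0; simpa [Wf_zero] using this
  have hf1 : f 1 = I ⟨0, hM⟩ := by
    show PL (nzv M N K) I 1 - (K:ℤ) * 1 - (-(K:ℤ)) = _
    rw [PL_one hM]; ring
  have hf0 : f 0 = I ⟨M-1, by omega⟩ - nzv M N K + (K:ℤ) := by
    show PL (nzv M N K) I 0 - (K:ℤ) * 0 - (-(K:ℤ)) = _
    rw [PL_zero hM]; ring
  rw [Wf_zero] at h1 h2
  rw [e1, hf1] at h1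
  rw [e2, hf0] at h2
  omega

lemma condC_strictMono_PL (hM : 0 < M) {I : Fin M → ℤ} (h : CondC M N K I) :
    StrictMono (PL (nzv M N K) I) := by
  apply PL_strictMono hM h.1
  have h1 := (h.2 ⟨M-1, by omega⟩).2
  have h2 := (h.2 ⟨0, hM⟩).1
  omega

lemma condS_strictMono_PL (hM : 0 < M) {I : Fin M → ℤ} (h : CondS M N K I) :
    StrictMono (PL (nzv M N K) I) := by
  apply PL_strictMono hM h.1
  have h1 := (condS_bounds hM h).1
  have h2 := (condS_bounds hM h).2
  have hK' : (0:ℤ) ≤ K := by positivity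
  omega

noncomputable def PhiI (M N K : ℕ) (I : Fin M → ℤ) (θ : ℤ) : (Fin M → ℤ) × ℤ :=
  (fun a => PL (nzv M N K) I (gidx (SF (K:ℤ) θ (PL (nzv M N K) I)) + 1 + (a:ℤ))
      - (θ + (K:ℤ) * (gidx (SF (K:ℤ) θ (PL (nzv M N K) I)) + 1)),
   (θ + (K:ℤ) * (gidx (SF (K:ℤ) θ (PL (nzv M N K) I)) + 1)) % nzv M N K)

noncomputable def PsiI (M N K : ℕ) (I' : Fin M → ℤ) (s₀ : ℤ) : (Fin M → ℤ) × ℤ :=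
  (fun a => PL (nzv M N K) I' (thr (fun j => PL (nzv M N K) I' j + s₀) + 1 + (a:ℤ)) + s₀,
   (s₀ + (K:ℤ) * (thr (fun j => PL (nzv M N K) I' j + s₀) - 1)) % (N:ℤ))

section MainLemmas

variable {M N K : ℕ}

lemma Phi_setup (hM : 0 < M) (hN : 0 < N) {I : Fin M → ℤ} (θ : ℤ) :
    ∃ i, Good (SF (K:ℤ) θ (PL (nzv M N K) I)) i := by
  have hq_qp : ∀ j, PL (nzv M N K) I (j + (M:ℤ)) = PL (nzv M N K) I j + nzv M N K :=
    PL_qp hM I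
  exact good_exists (by exact_mod_cast hM) (by exact_mod_cast hN) (SF_qp hq_qp θ)

lemma Phi_mem (hM : 0 < M) (hN : 0 < N) (hK : 0 < K) {I : Fin M → ℤ} {θ : ℤ}
    (hI : CondC M N K I) (hθ : 0 ≤ θ ∧ θ < (N:ℤ)) :
    CondS M N K (PhiI M N K I θ).1 ∧
      0 ≤ (PhiI M N K I θ).2 ∧ (PhiI M N K I θ).2 < nzv M N K := by
  set n : ℤ := nzv M N K with hn
  set q : ℤ → ℤ := PL n I with hqdef
  have hq_qp : ∀ j, q (j + (M:ℤ)) = q j + n := PL_qp hM I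
  have hqSM : StrictMono q := condC_strictMono_PL hM hI
  set f : ℤ → ℤ := SF (K:ℤ) θ q with hfdef
  have hf_qp : ∀ j, f (j + (M:ℤ)) = f j + (N:ℤ) := SF_qp hq_qp θ
  have hex : ∃ i, Good f i := Phi_setup hM hN θ
  set i : ℤ := gidx f with hidef
  have hGi : Good f i := gidx_good hex
  set s : ℤ := θ + (K:ℤ) * (i + 1) with hsdef
  have e1 : (PhiI M N K I θ).1 = fun (a : Fin M) => q (i + 1 + (a:ℤ)) - s := rfl
  have e2 : (PhiI M N K I θ).2 = s % n := rfl
  rw [e1, e2]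
  have hg1 : ∀ j, (fun j => q (i + j) - s) (j + (M:ℤ)) = (fun j => q (i + j) - s) j + n := by
    intro j
    show q (i + (j + (M:ℤ))) - s = q (i + j) - s + n
    rw [show i + (j + (M:ℤ)) = (i + j) + (M:ℤ) from by ring, hq_qp]
    ring
  have hg2 : ∀ a : Fin M, (fun j => q (i + j) - s) ((a:ℤ) + 1) =
      (fun (a : Fin M) => q (i + 1 + (a:ℤ)) - s) a := by
    intro a
    show q (i + ((a:ℤ) + 1)) - s = q (i + 1 + (a:ℤ)) - s
    rw [show i + ((a:ℤ) + 1) = i + 1 + (a:ℤ) from by ring]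
  have hlift : ∀ j, q (i + j) - s = PL n (fun (a : Fin M) => q (i + 1 + (a:ℤ)) - s) j :=
    PL_lift_unique (g := fun j => q (i + j) - s) hM hg1 hg2
  refine ⟨⟨?_, ?_⟩, ?_, ?_⟩
  · intro a b hab
    have hab' : (a:ℤ) < (b:ℤ) := by exact_mod_cast hab
    have : q (i + 1 + (a:ℤ)) < q (i + 1 + (b:ℤ)) := hqSM (by omega)
    simpa using this
  · have hfun : SF (K:ℤ) (-(K:ℤ)) (PL n (fun (a : Fin M) => q (i + 1 + (a:ℤ)) - s)) =
        fun j => f (j + i) := by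
      funext j
      show PL n (fun (a : Fin M) => q (i + 1 + (a:ℤ)) - s) j - (K:ℤ) * j - (-(K:ℤ)) =
        q (j + i) - (K:ℤ) * (j + i) - θ
      rw [← hlift j]
      rw [show i + j = j + i from by ring, hsdef]
      ring
    rw [hfun]
    exact good_comp_add (by rw [zero_add]; exact hGi)
  · exact Int.emod_nonneg _ (nzv_pos hN).ne'
  · exact Int.emod_lt_of_pos _ (nzv_pos hN)

lemma Psi_mem (hM : 0 < M) (hN : 0 < N) (hK : 0 < K) {I' : Fin M → ℤ} {s₀ : ℤ}
    (hI : CondS M N K I') (hs : 0 ≤ s₀ ∧ s₀ < nzv M N K) :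
    CondC M N K (PsiI M N K I' s₀).1 ∧
      0 ≤ (PsiI M N K I' s₀).2 ∧ (PsiI M N K I' s₀).2 < (N:ℤ) := by
  set n : ℤ := nzv M N K with hn
  set q'' : ℤ → ℤ := fun j => PL n I' j + s₀ with hq''def
  have hq''SM : StrictMono q'' := by
    intro a b hab
    exact add_lt_add_left (condS_strictMono_PL hM hI hab) s₀
  have hq''qp : ∀ j, q'' (j + (M:ℤ)) = q'' j + n := by
    intro j
    show PL n I' (j + (M:ℤ)) + s₀ = PL n I' j + s₀ + n
    rw [PL_qp hM I' j]; ring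
  have hex : ∃ d, q'' d < 0 ∧ 0 ≤ q'' (d + 1) :=
    (exists_threshold hq''SM hq''qp (nzv_pos hN)).exists
  set d : ℤ := thr q'' with hddef
  have hd := thr_spec hex
  rw [← hddef] at hd
  have e1 : (PsiI M N K I' s₀).1 = fun (a : Fin M) => q'' (d + 1 + (a:ℤ)) := rfl
  have e2 : (PsiI M N K I' s₀).2 = (s₀ + (K:ℤ) * (d - 1)) % (N:ℤ) := rfl
  rw [e1, e2]
  have hNz : (0:ℤ) < (N:ℤ) := by exact_mod_cast hN
  refine ⟨⟨?_, ?_⟩, ?_, ?_⟩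
  · intro a b hab
    have hab' : (a:ℤ) < (b:ℤ) := by exact_mod_cast hab
    exact hq''SM (by omega)
  · intro a
    have ha0 : (0:ℤ) ≤ (a:ℤ) := by positivity
    have haM : (a:ℤ) ≤ (M:ℤ) - 1 := by
      have := a.isLt
      omega
    constructor
    · calc (0:ℤ) ≤ q'' (d + 1) := hd.2
        _ ≤ q'' (d + 1 + (a:ℤ)) := hq''SM.monotone (by omega)
    · calc q'' (d + 1 + (a:ℤ)) ≤ q'' (d + (M:ℤ)) := hq''SM.monotone (by omega)
        _ = q'' d + n := hq''qp d
        _ < n := by have := hd.1; omega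
  · exact Int.emod_nonneg _ hNz.ne'
  · exact Int.emod_lt_of_pos _ hNz

end MainLemmas

section RoundTrips

variable {M N K : ℕ}

lemma Psi_Phi (hM : 0 < M) (hN : 0 < N) (hK : 0 < K) {I : Fin M → ℤ} {θ : ℤ}
    (hI : CondC M N K I) (hθ : 0 ≤ θ ∧ θ < (N:ℤ)) :
    PsiI M N K (PhiI M N K I θ).1 (PhiI M N K I θ).2 = (I, θ) := by
  set n : ℤ := nzv M N K with hn
  have hn' : n = (K:ℤ) * M + N := rfl
  set q : ℤ → ℤ := PL n I with hqdef
  have hq_qp : ∀ j, q (j + (M:ℤ)) = q j + n := PL_qp hM I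
  have hqSM : StrictMono q := condC_strictMono_PL hM hI
  set f : ℤ → ℤ := SF (K:ℤ) θ q with hfdef
  have hex : ∃ i, Good f i := Phi_setup hM hN θ
  set i : ℤ := gidx f with hidef
  set s : ℤ := θ + (K:ℤ) * (i + 1) with hsdef
  set I' : Fin M → ℤ := fun (a : Fin M) => q (i + 1 + (a:ℤ)) - s with hI'def
  set s₀ : ℤ := s % n with hs₀def
  have e1 : (PhiI M N K I θ).1 = I' := rfl
  have e2 : (PhiI M N K I θ).2 = s₀ := rfl
  rw [e1, e2]
  set t : ℤ := s / n with htdef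
  have hst : n * t + s₀ = s := Int.mul_ediv_add_emod s n
  -- the lift of I'
  have hg1 : ∀ j, (fun j => q (i + j) - s) (j + (M:ℤ)) = (fun j => q (i + j) - s) j + n := by
    intro j
    show q (i + (j + (M:ℤ))) - s = q (i + j) - s + n
    rw [show i + (j + (M:ℤ)) = (i + j) + (M:ℤ) from by ring, hq_qp]
    ring
  have hg2 : ∀ a : Fin M, (fun j => q (i + j) - s) ((a:ℤ) + 1) = I' a := by
    intro a
    show q (i + ((a:ℤ) + 1)) - s = q (i + 1 + (a:ℤ)) - s
    rw [show i + ((a:ℤ) + 1) = i + 1 + (a:ℤ) from by ring]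
  have hlift : ∀ j, q (i + j) - s = PL n I' j :=
    PL_lift_unique (g := fun j => q (i + j) - s) hM hg1 hg2
  -- q'' as a shift of q (pointwise form)
  have hq''pt : ∀ j, PL n I' j + s₀ = q (j + (i - t * (M:ℤ))) := by
    intro j
    rw [← hlift j]
    have h1 : q ((i + j) + (-t) * (M:ℤ)) = q (i + j) + (-t) * n := qp_mul hq_qp (i + j) (-t)
    rw [show j + (i - t * (M:ℤ)) = (i + j) + (-t) * (M:ℤ) from by ring, h1]
    linarith [hst]
  -- threshold identification
  have hthr : thr (fun j => PL n I' j + s₀) = t * (M:ℤ) - i := by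
    apply thr_eq (Mz := (M:ℤ)) (nzq := n) _ _ (nzv_pos hN)
    · constructor
      · show PL n I' (t * (M:ℤ) - i) + s₀ < 0
        rw [hq''pt]
        rw [show (t * (M:ℤ) - i) + (i - t * (M:ℤ)) = 0 from by ring, hqdef, PL_zero hM]
        have := (hI.2 ⟨M-1, by omega⟩).2
        omega
      · show 0 ≤ PL n I' ((t * (M:ℤ) - i) + 1) + s₀
        rw [hq''pt]
        rw [show ((t * (M:ℤ) - i) + 1) + (i - t * (M:ℤ)) = 1 from by ring, hqdef, PL_one hM]
        exact (hI.2 ⟨0, hM⟩).1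
    · intro a b hab
      show PL n I' a + s₀ < PL n I' b + s₀
      rw [hq''pt a, hq''pt b]
      exact hqSM (by omega)
    · intro j
      show PL n I' (j + (M:ℤ)) + s₀ = (PL n I' j + s₀) + n
      rw [hq''pt (j + (M:ℤ)), hq''pt j]
      rw [show (j + (M:ℤ)) + (i - t * (M:ℤ)) = (j + (i - t * (M:ℤ))) + (M:ℤ) from by ring,
        hq_qp]
  rw [Prod.ext_iff]
  constructor
  · show (fun (a : Fin M) => PL n I' (thr (fun j => PL n I' j + s₀) + 1 + (a:ℤ)) + s₀) = I
    rw [hthr]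
    funext a
    show PL n I' (t * (M:ℤ) - i + 1 + (a:ℤ)) + s₀ = I a
    rw [hq''pt]
    rw [show (t * (M:ℤ) - i + 1 + (a:ℤ)) + (i - t * (M:ℤ)) = (a:ℤ) + 1 from by ring,
      hqdef, PL_eval hM]
  · show (s₀ + (K:ℤ) * (thr (fun j => PL n I' j + s₀) - 1)) % (N:ℤ) = θ
    rw [hthr]
    have hkey : s₀ + (K:ℤ) * (t * (M:ℤ) - i - 1) = θ + (N:ℤ) * (-t) := by
      have hs₀' : s₀ = s - n * t := by omega
      rw [hs₀', hsdef, hn']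
      ring
    rw [show ((K:ℤ) * (t * (M:ℤ) - i - 1)) = (K:ℤ) * ((t * (M:ℤ) - i) - 1) from by ring]
      at hkey
    rw [hkey, Int.add_mul_emod_self_left]
    exact Int.emod_eq_of_lt hθ.1 hθ.2

lemma Phi_Psi (hM : 0 < M) (hN : 0 < N) (hK : 0 < K) {I' : Fin M → ℤ} {s₀ : ℤ}
    (hI : CondS M N K I') (hs : 0 ≤ s₀ ∧ s₀ < nzv M N K) :
    PhiI M N K (PsiI M N K I' s₀).1 (PsiI M N K I' s₀).2 = (I', s₀) := by
  set n : ℤ := nzv M N K with hn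
  have hn' : n = (K:ℤ) * M + N := rfl
  have hNz : (0:ℤ) < (N:ℤ) := by exact_mod_cast hN
  set q' : ℤ → ℤ := PL n I' with hq'def
  have hq'qp : ∀ j, q' (j + (M:ℤ)) = q' j + n := PL_qp hM I'
  have hq'SM : StrictMono q' := condS_strictMono_PL hM hI
  set q'' : ℤ → ℤ := fun j => q' j + s₀ with hq''def
  have hq''SM : StrictMono q'' := fun a b hab => add_lt_add_left (hq'SM hab) s₀
  have hq''qp : ∀ j, q'' (j + (M:ℤ)) = q'' j + n := by
    intro j
    show q' (j + (M:ℤ)) + s₀ = q' j + s₀ + n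
    rw [hq'qp j]; ring
  have hex : ∃ d, q'' d < 0 ∧ 0 ≤ q'' (d + 1) :=
    (exists_threshold hq''SM hq''qp (nzv_pos hN)).exists
  set d : ℤ := thr q'' with hddef
  have hd := thr_spec hex
  rw [← hddef] at hd
  set I₀ : Fin M → ℤ := fun (a : Fin M) => q'' (d + 1 + (a:ℤ)) with hI₀def
  set θ₀ : ℤ := (s₀ + (K:ℤ) * (d - 1)) % (N:ℤ) with hθ₀def
  have e1 : (PsiI M N K I' s₀).1 = I₀ := rfl
  have e2 : (PsiI M N K I' s₀).2 = θ₀ := rfl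
  rw [e1, e2]
  set u : ℤ := (s₀ + (K:ℤ) * (d - 1)) / (N:ℤ) with hudef
  have hu : (N:ℤ) * u + θ₀ = s₀ + (K:ℤ) * (d - 1) := Int.mul_ediv_add_emod _ _
  have hθ₀' : θ₀ = s₀ + (K:ℤ) * (d - 1) - (N:ℤ) * u := by omega
  -- lift of I₀
  have hg1 : ∀ j, (fun j => q'' (d + j)) (j + (M:ℤ)) = (fun j => q'' (d + j)) j + n := by
    intro j
    show q'' (d + (j + (M:ℤ))) = q'' (d + j) + n
    rw [show d + (j + (M:ℤ)) = (d + j) + (M:ℤ) from by ring, hq''qp]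
  have hg2 : ∀ a : Fin M, (fun j => q'' (d + j)) ((a:ℤ) + 1) = I₀ a := by
    intro a
    show q'' (d + ((a:ℤ) + 1)) = q'' (d + 1 + (a:ℤ))
    rw [show d + ((a:ℤ) + 1) = d + 1 + (a:ℤ) from by ring]
  have hlift : ∀ j, q'' (d + j) = PL n I₀ j :=
    PL_lift_unique (g := fun j => q'' (d + j)) hM hg1 hg2
  -- the step function for (I₀, θ₀) is a translate of the one for I'
  have hGood0 : Good (SF (K:ℤ) (-(K:ℤ)) q') 0 := hI.2
  have hfg : SF (K:ℤ) θ₀ (PL n I₀) =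
      fun j => (SF (K:ℤ) (-(K:ℤ)) q') (j + (d + u * (M:ℤ))) := by
    funext j
    simp only [SF]
    rw [← hlift j]
    have h1 : q' ((j + d) + u * (M:ℤ)) = q' (j + d) + u * n := qp_mul hq'qp (j + d) u
    rw [show j + (d + u * (M:ℤ)) = (j + d) + u * (M:ℤ) from by ring, h1]
    simp only [hq''def]
    rw [show d + j = j + d from by ring]
    rw [hθ₀', hn']
    ring
  have hGf : Good (SF (K:ℤ) θ₀ (PL n I₀)) (-(d + u * (M:ℤ))) := by
    rw [hfg]
    exact good_comp_add (by
      rw [show (-(d + u * (M:ℤ)) + (d + u * (M:ℤ))) = 0 from by ring]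
      exact hGood0)
  have hi : gidx (SF (K:ℤ) θ₀ (PL n I₀)) = -(d + u * (M:ℤ)) := gidx_eq hGf
  have hsval : θ₀ + (K:ℤ) * (-(d + u * (M:ℤ)) + 1) = s₀ - u * n := by
    rw [hθ₀', hn']
    ring
  rw [Prod.ext_iff]
  constructor
  · show (fun (a : Fin M) => PL n I₀ (gidx (SF (K:ℤ) θ₀ (PL n I₀)) + 1 + (a:ℤ))
      - (θ₀ + (K:ℤ) * (gidx (SF (K:ℤ) θ₀ (PL n I₀)) + 1))) = I'
    funext a
    simp only [hi]
    have h2 : PL n I₀ (-(d + u * (M:ℤ)) + 1 + (a:ℤ)) =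
        q'' (d + (-(d + u * (M:ℤ)) + 1 + (a:ℤ))) := (hlift _).symm
    rw [h2]
    have h3 : q'' (((a:ℤ) + 1) + (-u) * (M:ℤ)) = q'' ((a:ℤ) + 1) + (-u) * n :=
      qp_mul hq''qp ((a:ℤ) + 1) (-u)
    rw [show d + (-(d + u * (M:ℤ)) + 1 + (a:ℤ)) = ((a:ℤ) + 1) + (-u) * (M:ℤ) from by ring,
      h3]
    have h4 : q'' ((a:ℤ) + 1) = I' a + s₀ := by
      simp only [hq''def]
      rw [hq'def, PL_eval hM]
    rw [h4, hsval]
    ring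
  · show (θ₀ + (K:ℤ) * (gidx (SF (K:ℤ) θ₀ (PL n I₀)) + 1)) % n = s₀
    rw [hi, hsval]
    rw [show s₀ - u * n = s₀ + n * (-u) from by ring, Int.add_mul_emod_self_left]
    exact Int.emod_eq_of_lt hs.1 hs.2

end RoundTrips

lemma twoDivTri1 (r : ℕ) : 2 * (r*(r-1)/2) = r*(r-1) := by
  rcases r with - | s
  · simp
  · have hev : Even ((s+1)*s) := by
      rw [mul_comm]
      exact Nat.even_mul_succ_self s
    have : (s+1)*((s+1)-1) = (s+1)*s := by simp
    rw [this, Nat.mul_div_cancel' hev.two_dvd]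

lemma twoDivTri2 (r : ℕ) : 2 * (r*(r+1)/2) = r*(r+1) := by
  have hev : Even (r*(r+1)) := Nat.even_mul_succ_self r
  rw [Nat.mul_div_cancel' hev.two_dvd]

lemma natTri1 (r : ℕ) : (r+1)*((r+1)-1)/2 = r*(r-1)/2 + r := by
  have h1 := twoDivTri1 r
  have h2 := twoDivTri1 (r+1)
  have h3 : (r+1)*((r+1)-1) = r*(r-1) + 2*r := by
    rcases r with - | s
    · simp
    · simp only [Nat.add_sub_cancel]
      ring
  omega

lemma natTri2 (r : ℕ) : (r+1)*((r+1)+1)/2 = r*(r+1)/2 + (r+1) := by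
  have h1 := twoDivTri2 r
  have h2 := twoDivTri2 (r+1)
  have h3 : (r+1)*((r+1)+1) = r*(r+1) + 2*(r+1) := by ring
  omega

section Bridges

variable {M N K : ℕ}

lemma filter_lt_succ (hM : 0 < M) (r : ℕ) (hr : r < M) :
    Finset.univ.filter (fun j : Fin M => (j:ℕ) < r + 1) =
      insert (⟨r, hr⟩ : Fin M) (Finset.univ.filter (fun j : Fin M => (j:ℕ) < r)) := by
  ext a
  simp only [Finset.mem_filter, Finset.mem_univ, true_and, Finset.mem_insert, Fin.ext_iff,
    Fin.val_mk]
  omega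

lemma filter_ge_succ (hM : 0 < M) (r : ℕ) (hr : r < M) :
    Finset.univ.filter (fun j : Fin M => M - (r+1) ≤ (j:ℕ)) =
      insert (⟨M-1-r, by omega⟩ : Fin M)
        (Finset.univ.filter (fun j : Fin M => M - r ≤ (j:ℕ))) := by
  ext a
  simp only [Finset.mem_filter, Finset.mem_univ, true_and, Finset.mem_insert, Fin.ext_iff,
    Fin.val_mk]
  have := a.isLt
  omega

lemma BW1 (hM : 0 < M) (I : Fin M → ℤ) :
    ∀ r : ℕ, r ≤ M →
      Wf (SF (K:ℤ) (-(K:ℤ)) (PL (nzv M N K) I)) (r:ℤ) =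
        (∑ j ∈ Finset.univ.filter (fun j : Fin M => (j:ℕ) < r), I j)
          - (↑(r*(r-1)/2) : ℤ) * K := by
  set f₀ := SF (K:ℤ) (-(K:ℤ)) (PL (nzv M N K) I) with hf₀
  intro r
  induction r with
  | zero =>
      intro _
      have : Finset.univ.filter (fun j : Fin M => (j:ℕ) < 0) = ∅ := by
        ext a; simp
      rw [this]
      simp [Wf_zero]
  | succ r ih =>
      intro hr1
      have hr : r < M := by omega
      have hstep : Wf f₀ ((r:ℤ) + 1) = Wf f₀ (r:ℤ) + f₀ ((r:ℤ)+1) := Wf_succ f₀ (r:ℤ)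
      have hval : f₀ ((r:ℤ)+1) = I ⟨r, hr⟩ - (K:ℤ)*(r:ℤ) := by
        have he : ((⟨r, hr⟩ : Fin M):ℤ) + 1 = (r:ℤ) + 1 := by
          simp
        show PL (nzv M N K) I ((r:ℤ)+1) - (K:ℤ)*((r:ℤ)+1) - (-(K:ℤ)) = _
        rw [← he, PL_eval hM]
        ring
      have hins := filter_lt_succ hM r hr
      have hnotmem : (⟨r, hr⟩ : Fin M) ∉ Finset.univ.filter (fun j : Fin M => (j:ℕ) < r) := by
        simp
      have htri : (↑((r+1)*((r+1)-1)/2) : ℤ) = (↑(r*(r-1)/2) : ℤ) + r := by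
        rw [natTri1 r]; push_cast; ring
      have hcast : ((r+1 : ℕ) : ℤ) = (r:ℤ) + 1 := by push_cast; ring
      rw [hcast, hstep, hval, hins, Finset.sum_insert hnotmem, htri, ih (by omega)]
      ring

set_option maxHeartbeats 2000000 in
lemma BW2 (hM : 0 < M) (I : Fin M → ℤ) :
    ∀ r : ℕ, r ≤ M →
      Wf (SF (K:ℤ) (-(K:ℤ)) (PL (nzv M N K) I)) (-(r:ℤ)) =
        (r:ℤ) * nzv M N K - (↑(r*(r+1)/2) : ℤ) * K
          - ∑ j ∈ Finset.univ.filter (fun j : Fin M => M - r ≤ (j:ℕ)), I j := by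
  set f₀ := SF (K:ℤ) (-(K:ℤ)) (PL (nzv M N K) I) with hf₀
  intro r
  induction r with
  | zero =>
      intro _
      have : Finset.univ.filter (fun j : Fin M => M - 0 ≤ (j:ℕ)) = ∅ := by
        ext a; simp only [Finset.mem_filter, Finset.mem_univ, true_and, Finset.notMem_empty,
          iff_false]
        have := a.isLt
        omega
      rw [this]
      simp [Wf_zero]
  | succ r ih =>
      intro hr1
      have hr : r < M := by omega
      have hstep : Wf f₀ (-(r:ℤ) - 1) = Wf f₀ (-(r:ℤ)) - f₀ (-(r:ℤ)) := Wf_pred f₀ (-(r:ℤ))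
      have hval : f₀ (-(r:ℤ)) = I ⟨M-1-r, by omega⟩ - nzv M N K + (K:ℤ)*(r:ℤ) + K := by
        have he : ((⟨M-1-r, by omega⟩ : Fin M):ℤ) + 1 + (-1) * (M:ℤ) = -(r:ℤ) := by
          simp only [Fin.val_mk]
          omega
        show PL (nzv M N K) I (-(r:ℤ)) - (K:ℤ)*(-(r:ℤ)) - (-(K:ℤ)) = _
        rw [← he, PL_eval_gen hM, he]
        ring
      have hins := filter_ge_succ hM r hr
      have hnotmem : (⟨M-1-r, by omega⟩ : Fin M) ∉
          Finset.univ.filter (fun j : Fin M => M - r ≤ (j:ℕ)) := by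
        simp only [Finset.mem_filter, Finset.mem_univ, true_and, Fin.val_mk]
        omega
      have htri : (↑((r+1)*((r+1)+1)/2) : ℤ) = (↑(r*(r+1)/2) : ℤ) + (r:ℤ) + 1 := by
        rw [natTri2 r]; push_cast; ring
      have hcast : (-((r+1 : ℕ) : ℤ)) = -(r:ℤ) - 1 := by push_cast; ring
      rw [hcast, hstep, hval, hins, Finset.sum_insert hnotmem, htri, ih (by omega)]
      push_cast
      ring

/-- Equivalence of the statement's conditions with `CondS`. -/
lemma E1 (hM : 0 < M) (hN : 0 < N) (hK : 0 < K) (I : Fin M → ℤ) :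
    (StrictMono I ∧
      ∀ r : ℕ, 1 ≤ r → r ≤ M →
        ((↑(r * (r - 1) / 2) * (K : ℤ) ≤
            ∑ j ∈ Finset.univ.filter (fun j : Fin M => (j : ℕ) < r), I j) ∧
          (∑ j ∈ Finset.univ.filter (fun j : Fin M => M - r ≤ (j : ℕ)), I j ≤
            (r : ℤ) * M * K - ↑(r * (r + 1) / 2) * K + r * N - 1))) ↔
    CondS M N K I := by
  have hrw : ∀ r : ℕ, (r:ℤ) * nzv M N K = (r:ℤ) * M * K + r * N := by
    intro r
    show (r:ℤ) * ((K:ℤ) * M + N) = _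
    ring
  constructor
  · rintro ⟨hSM, hcond⟩
    refine ⟨hSM, ?_⟩
    have hMz : (0:ℤ) < (M:ℤ) := by exact_mod_cast hM
    have hNz : (0:ℤ) < (N:ℤ) := by exact_mod_cast hN
    refine good_of_window (f := SF (K:ℤ) (-(K:ℤ)) (PL (nzv M N K) I)) (Mz := (M:ℤ))
      (Nz := (N:ℤ)) hMz hNz (SF_qp (PL_qp hM I) (-(K:ℤ))) 0 ?_
    intro r hr1 hrM
    have hrnat : r = ((r.toNat : ℕ) : ℤ) := by omega
    set rn := r.toNat with hrn
    have hrn1 : 1 ≤ rn := by omega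
    have hrnM : rn ≤ M := by omega
    have h1 := BW1 (K := K) (N := N) hM I rn hrnM
    have h2 := BW2 (K := K) (N := N) hM I rn hrnM
    have hc := hcond rn hrn1 hrnM
    rw [Wf_zero, zero_add, show (0:ℤ) - r = -r from by ring, hrnat, h1, h2]
    constructor
    · omega
    · have := hrw rn
      omega
  · rintro ⟨hSM, hgood⟩
    refine ⟨hSM, ?_⟩
    intro r hr1 hrM
    have h1 := BW1 (K := K) (N := N) hM I r hrM
    have h2 := BW2 (K := K) (N := N) hM I r hrM
    have hg1 : Wf (SF (K:ℤ) (-(K:ℤ)) (PL (nzv M N K) I)) 0 ≤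
        Wf (SF (K:ℤ) (-(K:ℤ)) (PL (nzv M N K) I)) (r:ℤ) := by
      rcases eq_or_lt_of_le (by exact_mod_cast hr1 : (1:ℤ) ≤ (r:ℤ)) with h | h
      · exact hgood.2 (r:ℤ) (by omega)
      · exact hgood.2 (r:ℤ) (by omega)
    have hg2 : Wf (SF (K:ℤ) (-(K:ℤ)) (PL (nzv M N K) I)) 0 <
        Wf (SF (K:ℤ) (-(K:ℤ)) (PL (nzv M N K) I)) (-(r:ℤ)) :=
      hgood.1 (-(r:ℤ)) (by omega)
    rw [Wf_zero] at hg1 hg2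
    rw [h1] at hg1
    rw [h2] at hg2
    constructor
    · omega
    · have := hrw r
      omega

end Bridges

def intervalEquiv (L : ℕ) : {x : ℤ // 0 ≤ x ∧ x < (L:ℤ)} ≃ Fin L where
  toFun x := ⟨x.1.toNat, by have := x.2; omega⟩
  invFun k := ⟨(k:ℤ), ⟨by positivity, by exact_mod_cast k.isLt⟩⟩
  left_inv x := Subtype.ext (Int.toNat_of_nonneg x.2.1)
  right_inv k := Fin.ext (by simp)

lemma card_interval (L : ℕ) : Nat.card {x : ℤ // 0 ≤ x ∧ x < (L:ℤ)} = L := by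
  rw [Nat.card_congr (intervalEquiv L), Nat.card_eq_fintype_card, Fintype.card_fin]

section Cards

variable {M N K : ℕ}

lemma card_condC (hM : 0 < M) (hN : 0 < N) (hK : 0 < K) :
    Nat.card {I : Fin M → ℤ // CondC M N K I} = Nat.choose (K*M+N) M := by
  classical
  have hnn : ((K*M+N : ℕ) : ℤ) = nzv M N K := by unfold nzv; push_cast; ring
  let e1 : {I : Fin M → ℤ // CondC M N K I} ≃ {g : Fin M → Fin (K*M+N) // StrictMono g} :=
  { toFun := fun I => ⟨fun a => ⟨(I.1 a).toNat, by
        have h1 := (I.2.2 a).1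
        have h2 := (I.2.2 a).2
        rw [← hnn] at h2
        omega⟩, by
        intro a b hab
        have h1 := (I.2.2 a).1
        have h3 := I.2.1 hab
        simp only [Fin.mk_lt_mk]
        omega⟩
    invFun := fun g => ⟨fun a => ((g.1 a : ℕ) : ℤ), by
        constructor
        · intro a b hab
          have h := g.2 hab
          rw [Fin.lt_def] at h
          show ((g.1 a : ℕ):ℤ) < ((g.1 b : ℕ):ℤ)
          exact_mod_cast h
        · intro a
          refine ⟨by positivity, ?_⟩
          show ((g.1 a : ℕ):ℤ) < nzv M N K
          rw [← hnn]
          exact_mod_cast (g.1 a).isLt⟩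
    left_inv := fun I => Subtype.ext (funext fun a => Int.toNat_of_nonneg (I.2.2 a).1)
    right_inv := fun g => Subtype.ext (funext fun a => Fin.ext (by simp)) }
  let e2 : {g : Fin M → Fin (K*M+N) // StrictMono g} ≃
      {s : Finset (Fin (K*M+N)) // s.card = M} :=
  { toFun := fun g => ⟨Finset.image g.1 Finset.univ, by
        rw [Finset.card_image_of_injective _ g.2.injective, Finset.card_univ,
          Fintype.card_fin]⟩
    invFun := fun s => ⟨fun a => s.1.orderEmbOfFin s.2 a, (s.1.orderEmbOfFin s.2).strictMono⟩
    left_inv := fun g => Subtype.ext (by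
        have hcard : (Finset.image g.1 Finset.univ).card = M := by
          rw [Finset.card_image_of_injective _ g.2.injective, Finset.card_univ,
            Fintype.card_fin]
        have h := Finset.orderEmbOfFin_unique hcard
          (fun x => Finset.mem_image_of_mem _ (Finset.mem_univ x)) g.2
        exact funext fun a => (congrFun h a).symm)
    right_inv := fun s => Subtype.ext (by
        ext x
        simp only [Finset.mem_image, Finset.mem_univ, true_and]
        constructor
        · rintro ⟨i, rfl⟩
          exact Finset.orderEmbOfFin_mem s.1 s.2 i
        · intro hx
          have hr := Finset.range_orderEmbOfFin s.1 s.2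
          have hx' : x ∈ Set.range ⇑(s.1.orderEmbOfFin s.2) := by rw [hr]; exact hx
          obtain ⟨i, hi⟩ := hx'
          exact ⟨i, hi⟩) }
  rw [Nat.card_congr (e1.trans e2), Nat.card_eq_fintype_card, Fintype.card_finset_len,
    Fintype.card_fin]

lemma key_count (hM : 0 < M) (hN : 0 < N) (hK : 0 < K) :
    Nat.card {I : Fin M → ℤ // CondS M N K I} * (K*M+N) = Nat.choose (K*M+N) M * N := by
  classical
  have hnzv : ((K*M+N : ℕ):ℤ) = nzv M N K := by unfold nzv; push_cast; ring
  let eAB : {p : (Fin M → ℤ) × ℤ // CondC M N K p.1 ∧ (0 ≤ p.2 ∧ p.2 < (N:ℤ))} ≃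
      {p : (Fin M → ℤ) × ℤ // CondS M N K p.1 ∧ (0 ≤ p.2 ∧ p.2 < nzv M N K)} :=
  { toFun := fun x => ⟨PhiI M N K x.1.1 x.1.2, by
      have h := Phi_mem hM hN hK x.2.1 x.2.2
      exact ⟨h.1, h.2.1, h.2.2⟩⟩
    invFun := fun y => ⟨PsiI M N K y.1.1 y.1.2, by
      have h := Psi_mem hM hN hK y.2.1 y.2.2
      exact ⟨h.1, h.2.1, h.2.2⟩⟩
    left_inv := fun x => Subtype.ext (by
      have h := Psi_Phi hM hN hK x.2.1 x.2.2
      simpa using h)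
    right_inv := fun y => Subtype.ext (by
      have h := Phi_Psi hM hN hK y.2.1 y.2.2
      simpa using h) }
  have hA : Nat.card {p : (Fin M → ℤ) × ℤ // CondC M N K p.1 ∧ (0 ≤ p.2 ∧ p.2 < (N:ℤ))} =
      Nat.choose (K*M+N) M * N := by
    rw [Nat.card_congr (Equiv.subtypeProdEquivProd
      (p := fun I : Fin M → ℤ => CondC M N K I) (q := fun θ : ℤ => 0 ≤ θ ∧ θ < (N:ℤ))),
      Nat.card_prod, card_condC hM hN hK, card_interval N]
  have hB : Nat.card {p : (Fin M → ℤ) × ℤ // CondS M N K p.1 ∧ (0 ≤ p.2 ∧ p.2 < nzv M N K)} =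
      Nat.card {I : Fin M → ℤ // CondS M N K I} * (K*M+N) := by
    rw [Nat.card_congr (Equiv.subtypeProdEquivProd
      (p := fun I : Fin M → ℤ => CondS M N K I)
      (q := fun s : ℤ => 0 ≤ s ∧ s < nzv M N K)), Nat.card_prod]
    congr 1
    have e : {s : ℤ // 0 ≤ s ∧ s < nzv M N K} ≃ {s : ℤ // 0 ≤ s ∧ s < ((K*M+N : ℕ):ℤ)} :=
      Equiv.subtypeEquivRight (fun s => by rw [hnzv])
    rw [Nat.card_congr e, card_interval]
  rw [← hB, ← hA, Nat.card_congr eAB]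

end Cards

end CRBS

theorem count_rational_bethe_solutions (M N K : ℕ) (hM : 0 < M) (hN : 0 < N) (hK : 0 < K) :
    (Nat.card {I : Fin M → ℤ // StrictMono I ∧
        ∀ r : ℕ, 1 ≤ r → r ≤ M →
          ((↑(r * (r - 1) / 2) * (K : ℤ) ≤
              ∑ j ∈ Finset.univ.filter (fun j : Fin M => (j : ℕ) < r), I j) ∧
            (∑ j ∈ Finset.univ.filter (fun j : Fin M => M - r ≤ (j : ℕ)), I j ≤
              (r : ℤ) * M * K - ↑(r * (r + 1) / 2) * K + r * N - 1))} : ℚ) =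
      (N : ℚ) / (K * M + N) * (Nat.choose (K * M + N) M) := by
  classical
  have e0 : {I : Fin M → ℤ // StrictMono I ∧
        ∀ r : ℕ, 1 ≤ r → r ≤ M →
          ((↑(r * (r - 1) / 2) * (K : ℤ) ≤
              ∑ j ∈ Finset.univ.filter (fun j : Fin M => (j : ℕ) < r), I j) ∧
            (∑ j ∈ Finset.univ.filter (fun j : Fin M => M - r ≤ (j : ℕ)), I j ≤
              (r : ℤ) * M * K - ↑(r * (r + 1) / 2) * K + r * N - 1))} ≃
      {I : Fin M → ℤ // CRBS.CondS M N K I} :=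
    Equiv.subtypeEquivRight (fun I => CRBS.E1 hM hN hK I)
  rw [Nat.card_congr e0]
  have key := CRBS.key_count hM hN hK
  have hpos : 0 < K * M + N := by positivity
  have hkey : (Nat.card {I : Fin M → ℤ // CRBS.CondS M N K I} : ℚ) * ((K:ℚ) * M + N) =
      (Nat.choose (K*M+N) M : ℚ) * N := by
    have := congrArg (fun n : ℕ => (n : ℚ)) key
    push_cast at this
    linarith [this]
  have hden : ((K:ℚ) * M + N) ≠ 0 := by positivity
  field_simp
  linarith [hkey]
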